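/- For the double integrator ṗ = v, v̇ = u with |u| ≤ 1 and safety constraint p ≥ 0: if an initial state satisfies p₀ ≥ 0 and v₀ < 0 and p₀ < v₀²/2, then for every measurable control u with |u(t)| ≤ 1, the trajectory reaches a state with p(t) < 0 at some time t > 0. -/

import Mathlib

/-- For the double integrator with `|u| ≤ 1`, any initial state with
`p₀ ≥ 0`, `v₀ < 0` and `p₀ < v₀²/2` is inevitably unsafe: for every measurable
control `u` with `|u t| ≤ 1`, the trajectory reaches `p t < 0` at some `t > 0`. -/
theorem double_integrator_inevitably_unsafe
    (p₀ v₀ : ℝ) (hp₀ : 0 ≤ p₀) (hv₀ : v₀ < 0) (hunsafe : p₀ < v₀ ^ 2 / 2)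
    (u : ℝ → ℝ) (hu_meas : Measurable u) (hu : ∀ t : ℝ, |u t| ≤ 1)
    (p v : ℝ → ℝ)
    (hp0 : p 0 = p₀) (hv0 : v 0 = v₀)
    (hp : ∀ t : ℝ, 0 ≤ t → HasDerivAt p (v t) t)
    (hv : ∀ t : ℝ, 0 ≤ t → HasDerivAt v (u t) t) :
    ∃ t > (0:ℝ), p t < 0 := by
  -- Step 1: v t ≤ v₀ + t for t ≥ 0
  have hf : ∀ t : ℝ, 0 ≤ t → HasDerivAt (fun s => v s - s) (u t - 1) t := by
    intro t ht
    exact (hv t ht).sub (hasDerivAt_id t)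
  have hanti1 : AntitoneOn (fun s => v s - s) (Set.Ici 0) := by
    apply antitoneOn_of_deriv_nonpos (convex_Ici 0)
    · intro t ht
      exact (hf t ht).continuousAt.continuousWithinAt
    · intro t ht
      rw [interior_Ici] at ht
      exact (hf t ht.le).differentiableAt.differentiableWithinAt
    · intro t ht
      rw [interior_Ici] at ht
      rw [(hf t ht.le).deriv]
      have := (abs_le.mp (hu t)).2
      linarith
  have hvle : ∀ t : ℝ, 0 ≤ t → v t ≤ v₀ + t := by
    intro t ht
    have := hanti1 Set.self_mem_Ici ht ht
    simp only [hv0] at this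
    linarith
  -- Step 2: p t ≤ p₀ + v₀ t + t²/2 for t ≥ 0
  have hg : ∀ t : ℝ, 0 ≤ t →
      HasDerivAt (fun s => p s - v₀ * s - s ^ 2 / 2) (v t - (v₀ + t)) t := by
    intro t ht
    have h1 : HasDerivAt (fun s : ℝ => v₀ * s) v₀ t := by
      simpa using (hasDerivAt_id t).const_mul v₀
    have h2 : HasDerivAt (fun s : ℝ => s ^ 2 / 2) t t := by
      have := (hasDerivAt_pow 2 t).div_const 2
      simpa using this
    have := ((hp t ht).fun_sub h1).fun_sub h2
    refine this.congr_deriv ?_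
    ring
  have hanti2 : AntitoneOn (fun s => p s - v₀ * s - s ^ 2 / 2) (Set.Ici 0) := by
    apply antitoneOn_of_deriv_nonpos (convex_Ici 0)
    · intro t ht
      exact (hg t ht).continuousAt.continuousWithinAt
    · intro t ht
      rw [interior_Ici] at ht
      exact (hg t ht.le).differentiableAt.differentiableWithinAt
    · intro t ht
      rw [interior_Ici] at ht
      rw [(hg t ht.le).deriv]
      have := hvle t ht.le
      linarith
  have hT : (0:ℝ) < -v₀ := by linarith
  refine ⟨-v₀, hT, ?_⟩
  have := hanti2 Set.self_mem_Ici (Set.mem_Ici.mpr hT.le) hT.le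
  simp only [hp0] at this
  nlinarith [this]
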